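/- Let 𝒮 = {I_1,…,I_k} be a nonempty antichain in 𝒫(N)∖{∅}, and define f_𝒮 : 𝖱^n → 𝖱 by f_𝒮(x_1,…,x_n) = max_{ℓ=1,…,k} min_{i∈I_ℓ} x_i. Then f_𝒮 is continuous and its cofinality class is exactly the upward closure of 𝒮, i.e., 𝔠(f_𝒮) = {J ⊆ N : I_ℓ ⊆ J for some ℓ}; in particular the minimal elements of 𝔠(f_𝒮) are exactly the elements of 𝒮. -/

import Mathlib

noncomputable section
open Set

/-- The first uncountable ordinal `ω₁`. -/
def Omega1 : Ordinal := Ordinal.omega 1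

/-- The closed long ray `𝖱`: `ω₁ × [0,1)` with the lexicographic order. -/
def LongRay : Type 1 := {o : Ordinal // o < Omega1} ×ₗ (Set.Ico (0:ℝ) 1)

instance : LinearOrder LongRay :=
  inferInstanceAs (LinearOrder ({o : Ordinal // o < Omega1} ×ₗ (Set.Ico (0:ℝ) 1)))

/-- `𝖱` carries the order topology. -/
instance : TopologicalSpace LongRay := Preorder.topology LongRay
instance : OrderTopology LongRay := ⟨rfl⟩

lemma omega1_pos : (0 : Ordinal) < Omega1 := Ordinal.omega_pos 1

/-- The point `0 = (0,0)` of the long ray. -/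
def rayZero : LongRay := toLex (⟨0, omega1_pos⟩, ⟨0, by simp⟩)

/-- Identification of the countable ordinal `o` with the point `(o,0)` of the long ray
(junk value for `o ≥ ω₁`). -/
def ordR (o : Ordinal) : LongRay :=
  if h : o < Omega1 then toLex (⟨o, h⟩, ⟨0, by simp⟩) else rayZero

/-- The `I`-diagonal at height `c` (only the values of `c` off `I` are relevant). -/
def Delta (n : ℕ) (I : Finset (Fin n)) (c : Fin n → LongRay) : Set (Fin n → LongRay) :=
  {x | (∀ i ∈ I, ∀ i' ∈ I, x i = x i') ∧ ∀ j ∉ I, x j = c j}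

/-- `f` is `I`-cofinal if `f` restricted to `Δ_I = Δ_I(0)` is unbounded. -/
def ICofinal (n : ℕ) (f : (Fin n → LongRay) → LongRay) (I : Finset (Fin n)) : Prop :=
  ¬ BddAbove (f '' Delta n I (fun _ => rayZero))

/-- The cofinality class `𝔠(f) = {I : f is I-cofinal}`. -/
def cofClass (n : ℕ) (f : (Fin n → LongRay) → LongRay) : Set (Finset (Fin n)) :=
  {I | ICofinal n f I}

/-- `M_I(c) = {x : x_i ≥ c for all i ∈ I}`. -/
def MSet (n : ℕ) (I : Finset (Fin n)) (c : LongRay) : Set (Fin n → LongRay) :=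
  {x | ∀ i ∈ I, c ≤ x i}

/-- `E_I(b,d) = {x ∈ M_I(d) : x_j = b_j for all j ∉ I}`. -/
def ESet (n : ℕ) (I : Finset (Fin n)) (b : Fin n → LongRay) (d : LongRay) :
    Set (Fin n → LongRay) :=
  {x | (∀ i ∈ I, d ≤ x i) ∧ ∀ j ∉ I, x j = b j}

lemma rayZero_le (z : LongRay) : rayZero ≤ z := by
  show rayZero ≤ toLex (ofLex z)
  rw [rayZero]
  refine (Prod.Lex.le_iff).mpr ?_
  rcases eq_or_lt_of_le (zero_le (a := (ofLex z).1.1)) with h | h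
  · right
    refine ⟨Subtype.ext h, ?_⟩
    exact Subtype.coe_le_coe.mp (by simpa using (ofLex z).2.2.1)
  · left; exact h

lemma exists_gt_longRay (z : LongRay) : ∃ w : LongRay, z < w := by
  obtain ⟨hr0, hr1⟩ := (ofLex z).2.2
  refine ⟨toLex ((ofLex z).1, ⟨(((ofLex z).2 : ℝ)+1)/2,
    by constructor <;> nlinarith⟩), ?_⟩
  show toLex (ofLex z) < toLex _
  rw [Prod.Lex.lt_iff]
  right
  refine ⟨rfl, Subtype.coe_lt_coe.mp ?_⟩
  show ((ofLex z).2 : ℝ) < _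
  show ((ofLex z).2 : ℝ) < (((ofLex z).2 : ℝ)+1)/2
  linarith

/-- the canonical representant `f_𝒮(x) = max_{I ∈ 𝒮} min_{i ∈ I} x_i`
of a nonempty antichain `𝒮` is continuous and its cofinality class is the upward
closure of `𝒮`. -/
theorem canonical_representant_cofClass (n : ℕ) (S : Finset (Finset (Fin n)))
    (hS : S.Nonempty) (hne : ∀ I ∈ S, I.Nonempty)
    (hanti : IsAntichain (· ⊆ ·) (S : Set (Finset (Fin n))))
    (f : (Fin n → LongRay) → LongRay)
    (hf : ∀ x, f x = S.attach.sup' (by rwa [Finset.attach_nonempty_iff])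
      (fun I => I.1.inf' (hne I.1 I.2) x)) :
    Continuous f ∧ cofClass n f = {J : Finset (Fin n) | ∃ I ∈ S, I ⊆ J} := by
  have hSa : S.attach.Nonempty := by rwa [Finset.attach_nonempty_iff]
  constructor
  · have : f = fun x => S.attach.sup' hSa (fun I => I.1.inf' (hne I.1 I.2) x) := funext hf
    rw [this]
    exact Continuous.finset_sup'_apply hSa fun I _ =>
      Continuous.finset_inf'_apply (hne I.1 I.2) fun i _ => continuous_apply i
  · ext J
    simp only [cofClass, ICofinal, Set.mem_setOf_eq]
    constructor
    · intro hJ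
      by_contra hno
      push_neg at hno
      apply hJ
      refine ⟨rayZero, ?_⟩
      rintro _ ⟨x, hx, rfl⟩
      rw [hf]
      apply Finset.sup'_le
      intro I _
      obtain ⟨i, hiI, hiJ⟩ := Finset.not_subset.mp (hno I.1 I.2)
      calc I.1.inf' (hne I.1 I.2) x ≤ x i := Finset.inf'_le _ hiI
        _ = rayZero := hx.2 i hiJ
    · rintro ⟨I₀, hI₀S, hI₀J⟩ ⟨b, hb⟩
      obtain ⟨t, ht⟩ := exists_gt_longRay b
      set x : Fin n → LongRay := fun i => if i ∈ J then t else rayZero with hxdef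
      have hxΔ : x ∈ Delta n J (fun _ => rayZero) := by
        constructor
        · intro i hi i' hi'; simp [hxdef, hi, hi']
        · intro j hj; simp [hxdef, hj]
      have hfx : t ≤ f x := by
        rw [hf]
        refine le_trans ?_ (Finset.le_sup' _ (Finset.mem_attach S ⟨I₀, hI₀S⟩))
        apply Finset.le_inf'
        intro i hi
        simp [hxdef, hI₀J hi]
      have := hb ⟨x, hxΔ, rfl⟩
      exact absurd (le_trans hfx this) (not_le.mpr ht)
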